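/- Let f : [0,T] → ℝ be differentiable with f(0) = W and f'(t) ≤ D₂ − D₁ f(t)^{1+η} for all t, where D₁, D₂, η > 0 and f ≥ 0. Define k(t) = D₃ t + (D₁ η t + W^{−η})^{−1/η} for any D₃ ≥ D₂. Then f(t) ≤ k(t) for all t ∈ [0,T]. -/

import Mathlib

/-- Differential-inequality comparison: if `f(0) = W > 0`, `f ≥ 0` and
`f' ≤ D₂ − D₁ f^{1+η}` on `[0,T]`, then `f(t) ≤ k(t) = D₃ t + (D₁ η t + W^{−η})^{−1/η}`
on `[0,T]` for any `D₃ ≥ D₂`. -/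
theorem stmt9 (T W D₁ D₂ D₃ η : ℝ) (hT : 0 ≤ T) (hW : 0 < W)
    (hD₁ : 0 < D₁) (hD₂ : 0 < D₂) (hη : 0 < η) (hD₃ : D₂ ≤ D₃)
    (f f' : ℝ → ℝ)
    (hderiv : ∀ t ∈ Set.Icc 0 T, HasDerivAt f (f' t) t)
    (hf0 : f 0 = W)
    (hfnonneg : ∀ t ∈ Set.Icc 0 T, 0 ≤ f t)
    (hineq : ∀ t ∈ Set.Icc 0 T, f' t ≤ D₂ - D₁ * (f t) ^ (1 + η))
    (k : ℝ → ℝ)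
    (hk : ∀ t : ℝ, k t = D₃ * t + (D₁ * η * t + W ^ (-η)) ^ (-(1 / η))) :
    ∀ t ∈ Set.Icc 0 T, f t ≤ k t := by
  have hη0 : η ≠ 0 := ne_of_gt hη
  set a : ℝ → ℝ := fun t => D₁ * η * t + W ^ (-η) with ha_def
  have hWη : (0:ℝ) < W ^ (-η) := Real.rpow_pos_of_pos hW _
  have hapos : ∀ x : ℝ, 0 ≤ x → 0 < a x := by
    intro x hx
    have : 0 ≤ D₁ * η * x := by positivity
    simp only [ha_def]; linarith
  -- derivative of the barrier without perturbation
  have hk0 : k 0 = W := by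
    rw [hk]
    simp only [mul_zero, zero_add]
    rw [← Real.rpow_mul hW.le, show -η * -(1/η) = 1 by field_simp, Real.rpow_one]
  have hkd : ∀ x : ℝ, 0 ≤ x →
      HasDerivAt k (D₃ - D₁ * (a x) ^ (-(1/η) - 1)) x := by
    intro x hx
    have hax := hapos x hx
    have h1 : HasDerivAt a (D₁ * η) x := by
      exact (((hasDerivAt_id x).const_mul (D₁ * η)).add_const (W ^ (-η))).congr_deriv (by ring)
    have h2 : HasDerivAt (fun y => (a y) ^ (-(1/η)))
        ((-(1/η)) * (a x) ^ (-(1/η) - 1) * (D₁ * η)) x := by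
      exact (Real.hasDerivAt_rpow_const (Or.inl (ne_of_gt hax))).comp x h1
    have h3 : HasDerivAt (fun y => D₃ * y + (a y) ^ (-(1/η)))
        (D₃ + (-(1/η)) * (a x) ^ (-(1/η) - 1) * (D₁ * η)) x := by
      exact (((hasDerivAt_id x).const_mul D₃).add h2).congr_deriv (by ring)
    have heq : (fun y => D₃ * y + (a y) ^ (-(1/η))) = k := by
      funext y; rw [hk y]
    have hval : D₃ + (-(1/η)) * (a x) ^ (-(1/η) - 1) * (D₁ * η)
        = D₃ - D₁ * (a x) ^ (-(1/η) - 1) := by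
      field_simp; ring
    rw [heq, hval] at h3
    exact h3
  -- main comparison with perturbed barrier k + ε t
  have main : ∀ ε > (0:ℝ), ∀ t ∈ Set.Icc 0 T, f t ≤ k t + ε * t := by
    intro ε hε
    have := image_le_of_deriv_right_lt_deriv_boundary'
      (f := f) (f' := f') (a := 0) (b := T)
      (B := fun t => k t + ε * t)
      (B' := fun t => (D₃ - D₁ * (a t) ^ (-(1/η) - 1)) + ε)
      (fun x hx => (hderiv x hx).continuousAt.continuousWithinAt)
      (fun x hx => (hderiv x (Set.mem_Icc_of_Ico hx)).hasDerivWithinAt)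
      (by show f 0 ≤ k 0 + ε * 0; rw [hf0, hk0]; simp)
      (by
        apply ContinuousOn.add _ (continuousOn_const.mul continuousOn_id)
        intro x hx
        exact ((hkd x hx.1).continuousAt.continuousWithinAt))
      (fun x hx => ((hkd x hx.1).add
        (((hasDerivAt_id x).const_mul ε))).hasDerivWithinAt.congr_deriv (by simp))
      ?_
    · exact fun t ht => this ht
    · -- the strict bound at touching points
      intro x hx hfx
      have hx' : x ∈ Set.Icc 0 T := Set.mem_Icc_of_Ico hx
      have hax := hapos x hx.1
      have hfx' : f x = k x + ε * x := hfx
      have hgle : (a x) ^ (-(1/η)) ≤ f x := by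
        rw [hfx', hk x]
        have h1 : 0 ≤ D₃ * x := mul_nonneg (le_of_lt (lt_of_lt_of_le hD₂ hD₃)) hx.1
        have h2 : 0 ≤ ε * x := mul_nonneg hε.le hx.1
        linarith
      have hpow : (a x) ^ (-(1/η) - 1) ≤ (f x) ^ (1 + η) := by
        have h1 : ((a x) ^ (-(1/η))) ^ (1 + η) ≤ (f x) ^ (1 + η) :=
          Real.rpow_le_rpow (Real.rpow_nonneg hax.le _) hgle (by linarith)
        have h2 : ((a x) ^ (-(1/η))) ^ (1 + η) = (a x) ^ (-(1/η) - 1) := by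
          rw [← Real.rpow_mul hax.le]
          congr 1
          field_simp
          ring
        rwa [h2] at h1
      calc f' x ≤ D₂ - D₁ * (f x) ^ (1 + η) := hineq x hx'
        _ ≤ D₃ - D₁ * (a x) ^ (-(1/η) - 1) := by
            have := mul_le_mul_of_nonneg_left hpow hD₁.le
            linarith
        _ < D₃ - D₁ * (a x) ^ (-(1/η) - 1) + ε := by linarith
  -- pass to the limit ε → 0
  intro t ht
  refine le_of_forall_pos_le_add ?_
  intro ε hε
  have hε' : 0 < ε / (T + 1) := by positivity
  have h := main _ hε' t ht
  have : ε / (T + 1) * t ≤ ε := by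
    rw [div_mul_eq_mul_div, div_le_iff₀ (by linarith)]
    have ht1 : t ≤ T := ht.2
    nlinarith
  linarith
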